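/- arXiv:2005.12964 — 2 statements merged into one kernel-verified Lean document; each statement's English description precedes it below -/
import Mathlib

section
/- Any φ with p_φ = r globally minimizes the expected contrastive loss: with Y finite, p_data full-support, q strictly positive, r(y) ∝ p_data(y)/q(y), and J(φ) = Σ_{y} p_data(y) E_{C_1,...,C_L ~ q iid}[ -log( exp(φ(y)) / (exp(φ(y)) + Σ_{i=1}^L exp(φ(C_i))) ) ], any φ satisfying exp(φ(y)) = c · p_data(y)/q(y) for some constant c > 0 and all y minimizes J over all φ : Y → ℝ. -/
open Real Finset

noncomputable def contrastiveJ {Y : Type*} [Fintype Y] [DecidableEq Y]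
    (p_data q : Y → ℝ) (L : ℕ) (φ : Y → ℝ) : ℝ :=
  ∑ y : Y, p_data y *
    ∑ C : Fin (L + 1) → Y,
      (if C 0 = y then ∏ i : Fin L, q (C i.succ) else 0) *
        (-Real.log (Real.exp (φ y) / ∑ i : Fin (L + 1), Real.exp (φ (C i))))

/-- Gibbs inequality with unnormalized weights. -/
lemma gibbs_aux {ι : Type*} [Fintype ι] [Nonempty ι] (w a : ι → ℝ)
    (hw : ∀ j, 0 < w j) (ha : ∀ j, 0 < a j) (hsum : ∑ j, a j = 1) :
    ∑ j, w j * (-Real.log (w j / ∑ k, w k)) ≤ ∑ j, w j * (-Real.log (a j)) := by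
  set W : ℝ := ∑ k, w k with hWdef
  have hW : 0 < W := Finset.sum_pos (fun j _ => hw j) Finset.univ_nonempty
  have key : ∀ j : ι, w j * Real.log (a j * W / w j) ≤ a j * W - w j := by
    intro j
    have hx : 0 < a j * W / w j := div_pos (mul_pos (ha j) hW) (hw j)
    have hlog := Real.log_le_sub_one_of_pos hx
    have h1 : w j * Real.log (a j * W / w j) ≤ w j * (a j * W / w j - 1) :=
      mul_le_mul_of_nonneg_left hlog (hw j).le
    have h2 : w j * (a j * W / w j - 1) = a j * W - w j := by
      rw [mul_sub, mul_one, mul_div_cancel₀ _ (hw j).ne']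
    linarith
  have hsumkey : ∑ j, w j * Real.log (a j * W / w j) ≤ 0 := by
    calc ∑ j, w j * Real.log (a j * W / w j) ≤ ∑ j, (a j * W - w j) :=
          Finset.sum_le_sum (fun j _ => key j)
      _ = (∑ j, a j) * W - W := by rw [Finset.sum_sub_distrib, ← Finset.sum_mul]
      _ = 0 := by rw [hsum]; ring
  have hrw : ∑ j, w j * (-Real.log (w j / W)) - ∑ j, w j * (-Real.log (a j))
      = ∑ j, w j * Real.log (a j * W / w j) := by
    rw [← Finset.sum_sub_distrib]
    refine Finset.sum_congr rfl fun j _ => ?_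
    rw [Real.log_div (ne_of_gt (mul_pos (ha j) hW)) (ne_of_gt (hw j)),
        Real.log_mul (ne_of_gt (ha j)) (ne_of_gt hW),
        Real.log_div (ne_of_gt (hw j)) (ne_of_gt hW)]
    ring
  linarith

theorem softmax_fit_minimizes_expected_contrastive_loss
    {Y : Type*} [Fintype Y] [DecidableEq Y] [Nonempty Y]
    (p_data q : Y → ℝ)
    (hpd_pos : ∀ y, 0 < p_data y) (hpd_sum : ∑ y, p_data y = 1)
    (hq_pos : ∀ y, 0 < q y) (hq_sum : ∑ y, q y = 1)
    (L : ℕ) (hL : 1 ≤ L) (φ : Y → ℝ)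
    (hfit : ∃ c : ℝ, 0 < c ∧ ∀ y, Real.exp (φ y) = c * (p_data y / q y)) :
    ∀ ψ : Y → ℝ, contrastiveJ p_data q L φ ≤ contrastiveJ p_data q L ψ := by
  intro ψ
  obtain ⟨c, hc, hcφ⟩ := hfit
  -- per-tuple, per-position term
  set h : (Y → ℝ) → (Fin (L + 1) → Y) → Fin (L + 1) → ℝ := fun θ C j =>
    (∏ i : Fin (L + 1), q (C i)) *
      ((p_data (C j) / q (C j)) *
        (-Real.log (Real.exp (θ (C j)) / ∑ i : Fin (L + 1), Real.exp (θ (C i))))) with hh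
  -- Step A+B: contrastiveJ = ∑ C, h θ C 0
  have stepAB : ∀ θ : Y → ℝ, contrastiveJ p_data q L θ = ∑ C : Fin (L + 1) → Y, h θ C 0 := by
    intro θ
    unfold contrastiveJ
    rw [show (∑ y : Y, p_data y * ∑ C : Fin (L + 1) → Y,
        (if C 0 = y then ∏ i : Fin L, q (C i.succ) else 0) *
        (-Real.log (Real.exp (θ y) / ∑ i : Fin (L + 1), Real.exp (θ (C i)))))
      = ∑ y : Y, ∑ C : Fin (L + 1) → Y, p_data y *
        ((if C 0 = y then ∏ i : Fin L, q (C i.succ) else 0) *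
        (-Real.log (Real.exp (θ y) / ∑ i : Fin (L + 1), Real.exp (θ (C i)))))
      from by simp [Finset.mul_sum]]
    rw [Finset.sum_comm]
    refine Finset.sum_congr rfl fun C _ => ?_
    rw [Finset.sum_eq_single (C 0)]
    · simp only [if_pos rfl, hh, if_true]
      have hprod : (∏ i : Fin (L + 1), q (C i))
          = q (C 0) * ∏ i : Fin L, q (C i.succ) := Fin.prod_univ_succ _
      rw [hprod]
      have hq0 : q (C 0) ≠ 0 := ne_of_gt (hq_pos (C 0))
      field_simp
    · intro y _ hy
      simp [Ne.symm hy]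
    · intro hy; exact absurd (Finset.mem_univ (C 0)) hy
  -- Step C: for every j, ∑ C, h θ C 0 = ∑ C, h θ C j
  have stepC : ∀ (θ : Y → ℝ) (j : Fin (L + 1)),
      ∑ C : Fin (L + 1) → Y, h θ C 0 = ∑ C : Fin (L + 1) → Y, h θ C j := by
    intro θ j
    refine (Fintype.sum_equiv ((Equiv.swap (0 : Fin (L + 1)) j).arrowCongr (Equiv.refl Y))
      (fun C => h θ C j) (fun C => h θ C 0) fun C => ?_).symm
    simp only [hh, Equiv.arrowCongr_apply, Equiv.refl_symm, Equiv.coe_refl, Function.comp, id_eq]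
    have hswap : ∀ i, C ((Equiv.swap (0 : Fin (L + 1)) j).symm i) = C (Equiv.swap 0 j i) := by
      intro i; rw [Equiv.symm_swap]
    have h0 : C (Equiv.swap (0 : Fin (L + 1)) j 0) = C j := by rw [Equiv.swap_apply_left]
    have hP : (∏ i : Fin (L + 1), q (C (Equiv.swap (0 : Fin (L + 1)) j i)))
        = ∏ i : Fin (L + 1), q (C i) := Equiv.prod_comp _ fun i => q (C i)
    have hS : (∑ i : Fin (L + 1), Real.exp (θ (C (Equiv.swap (0 : Fin (L + 1)) j i))))
        = ∑ i : Fin (L + 1), Real.exp (θ (C i)) := Equiv.sum_comp _ fun i => Real.exp (θ (C i))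
    simp only [hswap, h0, hP, hS]

  -- Step D: per-tuple Gibbs
  have stepD : ∀ C : Fin (L + 1) → Y,
      ∑ j : Fin (L + 1), h φ C j ≤ ∑ j : Fin (L + 1), h ψ C j := by
    intro C
    have hQ : 0 ≤ ∏ i : Fin (L + 1), q (C i) :=
      Finset.prod_nonneg fun i _ => (hq_pos (C i)).le
    simp only [hh, ← Finset.mul_sum]
    refine mul_le_mul_of_nonneg_left ?_ hQ
    set w : Fin (L + 1) → ℝ := fun j => p_data (C j) / q (C j) with hwdef
    have hw : ∀ j, 0 < w j := fun j => div_pos (hpd_pos (C j)) (hq_pos (C j))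
    set Sψ : ℝ := ∑ i : Fin (L + 1), Real.exp (ψ (C i)) with hSψ
    have hSψpos : 0 < Sψ := Finset.sum_pos (fun i _ => Real.exp_pos _) Finset.univ_nonempty
    set a : Fin (L + 1) → ℝ := fun j => Real.exp (ψ (C j)) / Sψ with hadef
    have ha : ∀ j, 0 < a j := fun j => div_pos (Real.exp_pos _) hSψpos
    have hasum : ∑ j, a j = 1 := by
      simp only [hadef, ← Finset.sum_div, ← hSψ]
      exact div_self (ne_of_gt hSψpos)
    have hopt : ∀ j : Fin (L + 1),
        Real.exp (φ (C j)) / (∑ i : Fin (L + 1), Real.exp (φ (C i))) = w j / ∑ k, w k := by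
      intro j
      have hSφ : (∑ i : Fin (L + 1), Real.exp (φ (C i))) = c * ∑ k, w k := by
        rw [Finset.mul_sum]
        exact Finset.sum_congr rfl fun i _ => hcφ (C i)
      rw [hcφ (C j), hSφ, mul_div_mul_left _ _ (ne_of_gt hc)]
    calc ∑ j : Fin (L + 1), w j *
          (-Real.log (Real.exp (φ (C j)) / ∑ i : Fin (L + 1), Real.exp (φ (C i))))
        = ∑ j, w j * (-Real.log (w j / ∑ k, w k)) := by
          refine Finset.sum_congr rfl fun j _ => ?_; rw [hopt j]
      _ ≤ ∑ j, w j * (-Real.log (a j)) := gibbs_aux w a hw ha hasum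
      _ = ∑ j : Fin (L + 1), w j *
          (-Real.log (Real.exp (ψ (C j)) / ∑ i : Fin (L + 1), Real.exp (ψ (C i)))) := rfl
  -- assemble
  have key : ((L : ℝ) + 1) * contrastiveJ p_data q L φ
      ≤ ((L : ℝ) + 1) * contrastiveJ p_data q L ψ := by
    have expand : ∀ θ : Y → ℝ, ((L : ℝ) + 1) * contrastiveJ p_data q L θ
        = ∑ C : Fin (L + 1) → Y, ∑ j : Fin (L + 1), h θ C j := by
      intro θ
      rw [Finset.sum_comm]
      calc ((L : ℝ) + 1) * contrastiveJ p_data q L θ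
          = ∑ _j : Fin (L + 1), contrastiveJ p_data q L θ := by
            rw [Finset.sum_const, Finset.card_univ, Fintype.card_fin, nsmul_eq_mul]
            push_cast; ring
        _ = ∑ j : Fin (L + 1), ∑ C : Fin (L + 1) → Y, h θ C j := by
            refine Finset.sum_congr rfl fun j _ => ?_
            rw [stepAB θ, stepC θ j]
    rw [expand φ, expand ψ]
    exact Finset.sum_le_sum fun C _ => stepD C
  have hL1 : (0 : ℝ) < (L : ℝ) + 1 := by positivity
  exact le_of_mul_le_mul_left key hL1
end

section
/- Strict convexity of cross-entropy in the distribution argument along softmax parametrization up to shift: the map from the quotient of ℝ^Y by constants to ℝ given by [φ] ↦ -Σ_y r(y) log p_φ(y), for a full-support distribution r on finite Y, is strictly convex, and therefore has a unique minimizer [φ*] with p_{φ*} = r. -/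
open Real Finset

/-- Strict two-point AM-GM: for distinct positive numbers. -/
lemma amgm2_strict {x y t : ℝ} (hx : 0 < x) (hy : 0 < y) (ht : 0 < t) (ht1 : t < 1)
    (hxy : x ≠ y) : x ^ t * y ^ (1 - t) < t * x + (1 - t) * y := by
  have hlog := strictConcaveOn_log_Ioi.2 (Set.mem_Ioi.2 hx) (Set.mem_Ioi.2 hy) hxy ht
    (show (0:ℝ) < 1 - t by linarith) (by ring)
  simp only [smul_eq_mul] at hlog
  have h1 : x ^ t * y ^ (1 - t) = Real.exp (t * Real.log x + (1 - t) * Real.log y) := by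
    rw [Real.rpow_def_of_pos hx, Real.rpow_def_of_pos hy, ← Real.exp_add]
    congr 1
    ring
  have h2 : 0 < t * x + (1 - t) * y := by
    have : 0 < 1 - t := by linarith
    positivity
  rw [h1, ← Real.exp_log h2]
  exact Real.exp_lt_exp.2 hlog

/-- Strict convexity of log-sum-exp transverse to constants. -/
lemma lse_strict {Y : Type*} [Fintype Y] [Nonempty Y] (a b : Y → ℝ)
    (h : ¬ ∃ c : ℝ, ∀ y, a y - b y = c) (t : ℝ) (ht : 0 < t) (ht1 : t < 1) :
    Real.log (∑ y, Real.exp (t * a y + (1 - t) * b y)) <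
      t * Real.log (∑ y, Real.exp (a y)) + (1 - t) * Real.log (∑ y, Real.exp (b y)) := by
  set A := ∑ y, Real.exp (a y) with hA
  set B := ∑ y, Real.exp (b y) with hB
  have hApos : 0 < A := Finset.sum_pos (fun y _ => Real.exp_pos _) Finset.univ_nonempty
  have hBpos : 0 < B := Finset.sum_pos (fun y _ => Real.exp_pos _) Finset.univ_nonempty
  set u : Y → ℝ := fun y => Real.exp (a y) / A with hu
  set v : Y → ℝ := fun y => Real.exp (b y) / B with hv
  have hupos : ∀ y, 0 < u y := fun y => div_pos (Real.exp_pos _) hApos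
  have hvpos : ∀ y, 0 < v y := fun y => div_pos (Real.exp_pos _) hBpos
  have husum : ∑ y, u y = 1 := by
    rw [hu]; rw [← Finset.sum_div, ← hA, div_self hApos.ne']
  have hvsum : ∑ y, v y = 1 := by
    rw [hv]; rw [← Finset.sum_div, ← hB, div_self hBpos.ne']
  obtain ⟨y0, hy0⟩ : ∃ y, u y ≠ v y := by
    by_contra hc
    push_neg at hc
    apply h
    refine ⟨Real.log A - Real.log B, fun y => ?_⟩
    have h1 : Real.exp (a y) / A = Real.exp (b y) / B := hc y
    rw [div_eq_div_iff hApos.ne' hBpos.ne'] at h1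
    have h2 := congrArg Real.log h1
    rw [Real.log_mul (Real.exp_pos _).ne' hBpos.ne',
      Real.log_mul (Real.exp_pos _).ne' hApos.ne', Real.log_exp, Real.log_exp] at h2
    linarith
  have hAt : (0:ℝ) < A ^ t := Real.rpow_pos_of_pos hApos _
  have hBt : (0:ℝ) < B ^ (1 - t) := Real.rpow_pos_of_pos hBpos _
  have key : ∀ y, Real.exp (t * a y + (1 - t) * b y) =
      A ^ t * B ^ (1 - t) * ((u y) ^ t * (v y) ^ (1 - t)) := by
    intro y
    have e1 : Real.exp (t * a y + (1 - t) * b y) =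
        Real.exp (a y) ^ t * Real.exp (b y) ^ (1 - t) := by
      rw [Real.exp_add, mul_comm t, mul_comm (1 - t), Real.exp_mul, Real.exp_mul]
    rw [e1, hu, hv, Real.div_rpow (Real.exp_pos _).le hApos.le,
      Real.div_rpow (Real.exp_pos _).le hBpos.le]
    field_simp
  have hsum_lt : ∑ y, (u y) ^ t * (v y) ^ (1 - t) < 1 := by
    have hle : ∀ y ∈ Finset.univ, (u y) ^ t * (v y) ^ (1 - t) ≤ t * u y + (1 - t) * v y :=
      fun y _ => Real.geom_mean_le_arith_mean2_weighted ht.le (by linarith) (hupos y).le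
        (hvpos y).le (by ring)
    have hlt : ∃ y ∈ Finset.univ, (u y) ^ t * (v y) ^ (1 - t) < t * u y + (1 - t) * v y :=
      ⟨y0, Finset.mem_univ _, amgm2_strict (hupos y0) (hvpos y0) ht ht1 hy0⟩
    calc ∑ y, (u y) ^ t * (v y) ^ (1 - t) < ∑ y, (t * u y + (1 - t) * v y) :=
          Finset.sum_lt_sum hle hlt
      _ = 1 := by rw [Finset.sum_add_distrib, ← Finset.mul_sum, ← Finset.mul_sum,
            husum, hvsum]; ring
  have hsum_pos : 0 < ∑ y, (u y) ^ t * (v y) ^ (1 - t) :=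
    Finset.sum_pos (fun y _ => mul_pos (Real.rpow_pos_of_pos (hupos y) _)
      (Real.rpow_pos_of_pos (hvpos y) _)) Finset.univ_nonempty
  have heq : ∑ y, Real.exp (t * a y + (1 - t) * b y) =
      A ^ t * B ^ (1 - t) * ∑ y, (u y) ^ t * (v y) ^ (1 - t) := by
    rw [Finset.mul_sum]; exact Finset.sum_congr rfl fun y _ => key y
  rw [heq]
  calc Real.log (A ^ t * B ^ (1 - t) * ∑ y, (u y) ^ t * (v y) ^ (1 - t))
      = Real.log (A ^ t * B ^ (1 - t)) + Real.log (∑ y, (u y) ^ t * (v y) ^ (1 - t)) :=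
        Real.log_mul (mul_pos hAt hBt).ne' hsum_pos.ne'
    _ < Real.log (A ^ t * B ^ (1 - t)) + 0 := by
        have : Real.log (∑ y, (u y) ^ t * (v y) ^ (1 - t)) < 0 :=
          Real.log_neg hsum_pos hsum_lt
        linarith
    _ = t * Real.log A + (1 - t) * Real.log B := by
        rw [add_zero, Real.log_mul hAt.ne' hBt.ne', Real.log_rpow hApos, Real.log_rpow hBpos]

/-- Gibbs' inequality with strictness. -/
lemma gibbs_aux_s19 {Y : Type*} [Fintype Y] (r p : Y → ℝ) (hr : ∀ y, 0 < r y)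
    (hr1 : ∑ y, r y = 1) (hp : ∀ y, 0 < p y) (hp1 : ∑ y, p y = 1) :
    (-∑ y, r y * Real.log (r y)) ≤ -∑ y, r y * Real.log (p y) ∧
    ((∃ y, p y ≠ r y) → (-∑ y, r y * Real.log (r y)) < -∑ y, r y * Real.log (p y)) := by
  have key : ∀ y, r y * Real.log (p y) - r y * Real.log (r y) ≤ p y - r y := by
    intro y
    have h1 : Real.log (p y / r y) ≤ p y / r y - 1 :=
      Real.log_le_sub_one_of_pos (div_pos (hp y) (hr y))
    have h2 : Real.log (p y / r y) = Real.log (p y) - Real.log (r y) :=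
      Real.log_div (hp y).ne' (hr y).ne'
    have h3 := mul_le_mul_of_nonneg_left h1 (hr y).le
    rw [h2] at h3
    have h4 : r y * (p y / r y - 1) = p y - r y := by
      rw [mul_sub, mul_one, mul_comm, div_mul_cancel₀ _ (hr y).ne']
    nlinarith [h3]
  have keys : ∀ y, p y ≠ r y → r y * Real.log (p y) - r y * Real.log (r y) < p y - r y := by
    intro y hy
    have h1 : Real.log (p y / r y) < p y / r y - 1 := by
      apply Real.log_lt_sub_one_of_pos (div_pos (hp y) (hr y))
      intro hcon
      apply hy
      rw [div_eq_one_iff_eq (hr y).ne'] at hcon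
      exact hcon
    have h2 : Real.log (p y / r y) = Real.log (p y) - Real.log (r y) :=
      Real.log_div (hp y).ne' (hr y).ne'
    have h3 := (mul_lt_mul_iff_right₀ (hr y)).2 h1
    rw [h2] at h3
    have h4 : r y * (p y / r y - 1) = p y - r y := by
      rw [mul_sub, mul_one, mul_comm, div_mul_cancel₀ _ (hr y).ne']
    nlinarith [h3]
  constructor
  · have := Finset.sum_le_sum (fun y (_ : y ∈ Finset.univ) => key y)
    rw [Finset.sum_sub_distrib, Finset.sum_sub_distrib, hr1, hp1] at this
    linarith
  · rintro ⟨y0, hy0⟩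
    have := Finset.sum_lt_sum (fun y (_ : y ∈ Finset.univ) => key y)
      ⟨y0, Finset.mem_univ _, keys y0 hy0⟩
    rw [Finset.sum_sub_distrib, Finset.sum_sub_distrib, hr1, hp1] at this
    linarith

theorem cross_entropy_strictly_convex_mod_constants
    {Y : Type*} [Fintype Y] [Nonempty Y]
    (r : Y → ℝ) (hr_pos : ∀ y, 0 < r y) (hr_sum : ∑ y, r y = 1) :
    let softmax : (Y → ℝ) → Y → ℝ :=
      fun φ y => Real.exp (φ y) / ∑ y', Real.exp (φ y')
    let f : (Y → ℝ) → ℝ := fun φ => -∑ y, r y * Real.log (softmax φ y)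
    (∀ φ ψ : Y → ℝ, (¬ ∃ c : ℝ, ∀ y, φ y - ψ y = c) →
      ∀ t : ℝ, 0 < t → t < 1 →
        f (fun y => t * φ y + (1 - t) * ψ y) < t * f φ + (1 - t) * f ψ) ∧
    (∃ φstar : Y → ℝ, (∀ y, softmax φstar y = r y) ∧
      ∀ φ : Y → ℝ, (∀ ψ : Y → ℝ, f φ ≤ f ψ) ↔ ∃ c : ℝ, ∀ y, φ y = φstar y + c) := by
  intro softmax f
  have hSpos : ∀ φ : Y → ℝ, 0 < ∑ y', Real.exp (φ y') :=
    fun φ => Finset.sum_pos (fun y _ => Real.exp_pos _) Finset.univ_nonempty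
  have hsm : ∀ (φ : Y → ℝ) y, softmax φ y = Real.exp (φ y) / ∑ y', Real.exp (φ y') :=
    fun _ _ => rfl
  have hfd : ∀ φ : Y → ℝ, f φ = -∑ y, r y * Real.log (softmax φ y) := fun _ => rfl
  have hsm_pos : ∀ (φ : Y → ℝ) y, 0 < softmax φ y := by
    intro φ y; rw [hsm]; exact div_pos (Real.exp_pos _) (hSpos φ)
  have hsm_sum : ∀ φ : Y → ℝ, ∑ y, softmax φ y = 1 := by
    intro φ
    rw [Finset.sum_congr rfl fun y _ => hsm φ y, ← Finset.sum_div, div_self (hSpos φ).ne']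
  -- f φ = log S φ - Σ r y * φ y
  have hf : ∀ φ : Y → ℝ, f φ = Real.log (∑ y', Real.exp (φ y')) - ∑ y, r y * φ y := by
    intro φ
    rw [hfd]
    have e1 : ∀ y, r y * Real.log (softmax φ y) =
        r y * φ y - r y * Real.log (∑ y', Real.exp (φ y')) := by
      intro y
      rw [hsm, Real.log_div (Real.exp_pos _).ne' (hSpos φ).ne', Real.log_exp]
      ring
    rw [Finset.sum_congr rfl fun y _ => e1 y, Finset.sum_sub_distrib,
      ← Finset.sum_mul, hr_sum]
    ring
  constructor
  · intro φ ψ h t ht ht1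
    rw [hf, hf, hf]
    have hlin : ∑ y, r y * (t * φ y + (1 - t) * ψ y) =
        t * ∑ y, r y * φ y + (1 - t) * ∑ y, r y * ψ y := by
      rw [Finset.mul_sum, Finset.mul_sum, ← Finset.sum_add_distrib]
      exact Finset.sum_congr rfl fun y _ => by ring
    have hl := lse_strict φ ψ h t ht ht1
    rw [hlin]
    linarith
  · set φstar : Y → ℝ := fun y => Real.log (r y) with hφstar
    have hsmstar : ∀ y, softmax φstar y = r y := by
      intro y
      rw [hsm]
      have e : ∀ y', Real.exp (φstar y') = r y' := fun y' => Real.exp_log (hr_pos y')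
      rw [e y, Finset.sum_congr rfl fun y' _ => e y', hr_sum, div_one]
    refine ⟨φstar, hsmstar, ?_⟩
    intro φ
    have hfstar : f φstar = -∑ y, r y * Real.log (r y) := by
      rw [hfd]
      exact congrArg Neg.neg (Finset.sum_congr rfl fun y _ => by rw [hsmstar y])
    have hgibbs : ∀ ψ : Y → ℝ, f φstar ≤ f ψ := by
      intro ψ
      rw [hfstar, hfd ψ]
      exact (gibbs_aux_s19 r (softmax ψ) hr_pos hr_sum (hsm_pos ψ) (hsm_sum ψ)).1
    constructor
    · intro hmin
      have heq : f φ = f φstar := le_antisymm (hmin φstar) (hgibbs φ)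
      have hsmφ : ∀ y, softmax φ y = r y := by
        by_contra hcon
        push_neg at hcon
        obtain ⟨y0, hy0⟩ := hcon
        have hlt : f φstar < f φ := by
          rw [hfstar, hfd φ]
          exact (gibbs_aux_s19 r (softmax φ) hr_pos hr_sum (hsm_pos φ) (hsm_sum φ)).2 ⟨y0, hy0⟩
        linarith
      refine ⟨Real.log (∑ y', Real.exp (φ y')), fun y => ?_⟩
      have h1 : Real.exp (φ y) / ∑ y', Real.exp (φ y') = r y := by rw [← hsm]; exact hsmφ y
      rw [div_eq_iff (hSpos φ).ne'] at h1
      have h2 := congrArg Real.log h1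
      rw [Real.log_exp, Real.log_mul (hr_pos y).ne' (hSpos φ).ne'] at h2
      exact h2
    · rintro ⟨c, hc⟩
      have hsame : f φ = f φstar := by
        rw [hf, hf]
        have he : ∀ y, Real.exp (φ y) = Real.exp c * Real.exp (φstar y) := by
          intro y
          rw [hc y, Real.exp_add]; ring
        rw [Finset.sum_congr rfl fun y _ => he y, ← Finset.mul_sum,
          Real.log_mul (Real.exp_pos _).ne' (hSpos φstar).ne', Real.log_exp]
        have hmul : ∀ y, r y * φ y = r y * φstar y + r y * c := fun y => by rw [hc y]; ring
        have hl : ∑ y, r y * φ y = ∑ y, r y * φstar y + c := by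
          rw [Finset.sum_congr rfl fun y _ => hmul y, Finset.sum_add_distrib,
            ← Finset.sum_mul, hr_sum, one_mul]
        rw [hl]
        ring
      intro ψ
      rw [hsame]
      exact hgibbs ψ
end
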